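/- Suppose X : [0,∞) → ℝ is differentiable with X' (t) = v̂1(t) where v̂1(t) = V1(t)/sqrt(1+V1(t)²+V2(t)²) and |V1(t)| ≤ C(1 + t^{1/2}) for some C > 0, and X(0) = x. If moreover X(t) ≥ x0 + t for all t ≥ 0 (for some x0), then for all t ≥ 0, ∫_0^t (1 - v̂1(s)) ds ≤ x - x0, while also 1 - v̂1(s) ≥ c/(1+s) for some c > 0; hence c·ln(1+t) ≤ x - x0 for all t, a contradiction for large t. -/

import Mathlib

open MeasureTheory intervalIntegral Set

lemma aux_abs (v w : ℝ) : |v / Real.sqrt (1 + v^2 + w^2)| ≤ 1 := by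
  have h0 : (0:ℝ) < 1 + v^2 + w^2 := by positivity
  have hs : |v| ≤ Real.sqrt (1 + v^2 + w^2) := by
    rw [← Real.sqrt_sq_eq_abs]
    exact Real.sqrt_le_sqrt (by nlinarith)
  rw [abs_div, abs_of_nonneg (Real.sqrt_nonneg _), div_le_one (by positivity)]
  exact hs

lemma aux_lower (v w : ℝ) : 1 / (2*(1+v^2)) ≤ 1 - v / Real.sqrt (1 + v^2 + w^2) := by
  set r := Real.sqrt (1 + v^2 + w^2) with hr
  have h0 : (0:ℝ) < 1 + v^2 + w^2 := by positivity
  have hr2 : r^2 = 1 + v^2 + w^2 := Real.sq_sqrt h0.le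
  have hr1 : 1 ≤ r := by
    calc (1:ℝ) = Real.sqrt 1 := Real.sqrt_one.symm
    _ ≤ r := Real.sqrt_le_sqrt (by nlinarith)
  have hrpos : 0 < r := by linarith
  have hv : |v| ≤ r := by
    rw [← Real.sqrt_sq_eq_abs]; exact Real.sqrt_le_sqrt (by nlinarith)
  have hvr : -r ≤ v ∧ v ≤ r := abs_le.mp hv
  have hrv : 0 < r + v := by nlinarith [sq_nonneg w]
  have hkey : r ≤ 2*(1+v^2)*(r-v) := by
    nlinarith [mul_pos hrv hrpos, sq_nonneg (v*w), hr2, hvr.2, hvr.1]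
  rw [show (1:ℝ) - v/r = (r-v)/r by field_simp]
  rw [div_le_div_iff₀ (by positivity) hrpos]
  nlinarith

theorem stmt6 (X V1 V2 : ℝ → ℝ) (C x x0 : ℝ) (hC : 0 < C)
    (hX : ∀ t ≥ (0:ℝ),
      HasDerivAt X (V1 t / Real.sqrt (1 + (V1 t)^2 + (V2 t)^2)) t)
    (hV1 : ∀ t ≥ (0:ℝ), |V1 t| ≤ C * (1 + t ^ ((1:ℝ)/2)))
    (hX0 : X 0 = x)
    (hsupp : ∀ t ≥ (0:ℝ), x0 + t ≤ X t) :
    (∀ t ≥ (0:ℝ),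
        (∫ s in (0:ℝ)..t, (1 - V1 s / Real.sqrt (1 + (V1 s)^2 + (V2 s)^2))) ≤ x - x0) ∧
    (∃ c > 0, (∀ s ≥ (0:ℝ),
        c / (1 + s) ≤ 1 - V1 s / Real.sqrt (1 + (V1 s)^2 + (V2 s)^2)) ∧
      ∀ t ≥ (0:ℝ), c * Real.log (1 + t) ≤ x - x0) ∧
    False := by
  set g : ℝ → ℝ := fun s => V1 s / Real.sqrt (1 + (V1 s)^2 + (V2 s)^2) with hg
  -- integrability
  have hint : ∀ t ≥ (0:ℝ), IntervalIntegrable g volume 0 t := by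
    intro t ht
    rw [intervalIntegrable_iff_integrableOn_Ioc_of_le ht]
    have hD : IntegrableOn (deriv X) (Ioc 0 t) volume := by
      refine Integrable.mono' (integrable_const 1)
        ((measurable_deriv X).aestronglyMeasurable) ?_
      filter_upwards [ae_restrict_mem measurableSet_Ioc] with s hs
      rw [(hX s hs.1.le).deriv, Real.norm_eq_abs]
      exact aux_abs _ _
    exact hD.congr_fun (fun s hs => (hX s hs.1.le).deriv) measurableSet_Ioc
  have h1 : ∀ t ≥ (0:ℝ), (∫ s in (0:ℝ)..t, (1 - g s)) ≤ x - x0 := by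
    intro t ht
    have hftc : ∫ s in (0:ℝ)..t, g s = X t - X 0 := by
      apply integral_eq_sub_of_hasDerivAt
      · intro s hs
        rw [uIcc_of_le ht] at hs
        exact hX s hs.1
      · exact hint t ht
    have hXt : x0 + t ≤ X t := hsupp t ht
    rw [intervalIntegral.integral_sub intervalIntegrable_const (hint t ht),
      intervalIntegral.integral_const, hftc, hX0]
    simp only [smul_eq_mul, mul_one]
    linarith
  set c : ℝ := 1 / (2*(1+2*C^2)) with hc
  have hcpos : 0 < c := by positivity
  have h2 : ∀ s ≥ (0:ℝ), c / (1 + s) ≤ 1 - g s := by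
    intro s hs
    have hsq : Real.sqrt s ^ 2 = s := Real.sq_sqrt hs
    have hv : |V1 s| ≤ C * (1 + s ^ ((1:ℝ)/2)) := hV1 s hs
    rw [show s ^ ((1:ℝ)/2) = Real.sqrt s by exact (Real.sqrt_eq_rpow s).symm] at hv
    have hv2 : (V1 s)^2 ≤ 2*C^2*(1+s) := by
      have h1 : (V1 s)^2 = |V1 s|^2 := (sq_abs _).symm
      nlinarith [abs_nonneg (V1 s), Real.sqrt_nonneg s, sq_nonneg (Real.sqrt s - 1), hC.le]
    have key := aux_lower (V1 s) (V2 s)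
    have hmono : c / (1+s) ≤ 1 / (2*(1+(V1 s)^2)) := by
      rw [hc, div_div]
      apply one_div_le_one_div_of_le (by positivity)
      nlinarith
    exact hmono.trans key
  have hxx : 0 ≤ x - x0 := by simpa using h1 0 le_rfl
  have h3 : ∀ t ≥ (0:ℝ), c * Real.log (1 + t) ≤ x - x0 := by
    intro t ht
    have hlog : ∫ s in (0:ℝ)..t, c / (1+s) = c * Real.log (1+t) := by
      have : ∀ s ∈ uIcc (0:ℝ) t, HasDerivAt (fun u => c * Real.log (1+u)) (c / (1+s)) s := by
        intro s hs
        rw [uIcc_of_le ht] at hs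
        have h1s : (0:ℝ) < 1 + s := by linarith [hs.1]
        have := ((hasDerivAt_id s).const_add (1:ℝ)).log h1s.ne'
        have h2 := this.const_mul c
        exact h2.congr_deriv (by simp [div_eq_mul_inv])
      have hci : IntervalIntegrable (fun s => c / (1+s)) volume 0 t := by
        apply ContinuousOn.intervalIntegrable
        apply ContinuousOn.div continuousOn_const (by fun_prop)
        intro s hs
        rw [uIcc_of_le ht] at hs
        intro h; linarith [hs.1]
      have := integral_eq_sub_of_hasDerivAt this hci
      rw [this]
      simp [Real.log_one]
    have hmono : ∫ s in (0:ℝ)..t, c / (1+s) ≤ ∫ s in (0:ℝ)..t, (1 - g s) := by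
      apply integral_mono_on ht
      · apply ContinuousOn.intervalIntegrable
        apply ContinuousOn.div continuousOn_const (by fun_prop)
        intro s hs
        rw [uIcc_of_le ht] at hs
        intro h; linarith [hs.1]
      · exact intervalIntegrable_const.sub (hint t ht)
      · exact fun s hs => h2 s hs.1
    rw [← hlog]
    exact hmono.trans (h1 t ht)
  refine ⟨h1, ⟨c, hcpos, h2, h3⟩, ?_⟩
  set T : ℝ := Real.exp ((x - x0 + 1)/c) - 1 with hT
  have hexp : 1 ≤ Real.exp ((x - x0 + 1)/c) := Real.one_le_exp (by positivity)
  have hT0 : (0:ℝ) ≤ T := by rw [hT]; linarith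
  have := h3 T hT0
  rw [show (1:ℝ) + T = Real.exp ((x - x0 + 1)/c) by rw [hT]; ring, Real.log_exp,
    mul_div_cancel₀ _ hcpos.ne'] at this
  linarith
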